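/- Let T' be a (q+1)-regular tree and form T by attaching, at every vertex of T', q^f − q new edges, and to each new vertex a rooted tree in which every vertex has q^f children. Then T is a (q^f+1)-regular tree, the inclusion T' ↪ T is an isometric embedding of graph metrics, and the ball of radius R in T intersected with T' equals the ball of radius R in T'. -/

import Mathlib

open SimpleGraph

namespace UnramifiedTreeExt

variable {V' : Type*} {W : Type} {m k : ℕ}

/-- Vertex type: old vertices plus attached-tree vertices `(base, edge index, word)`. -/
abbrev Vtx (W : Type) (m k : ℕ) : Type := W ⊕ (W × Fin m × List (Fin k))

/-- Parent map in the attached forest. -/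
def par : Vtx W m k → Option (Vtx W m k)
  | Sum.inl _ => none
  | Sum.inr (v, _, []) => some (Sum.inl v)
  | Sum.inr (v, i, _ :: s) => some (Sum.inr (v, i, s))

/-- Projection to the base vertex. -/
def pr : Vtx W m k → W
  | Sum.inl u => u
  | Sum.inr (v, _, _) => v

/-- Depth above the base tree. -/
def depth : Vtx W m k → ℕ
  | Sum.inl _ => 0
  | Sum.inr (_, _, s) => s.length + 1

/-- Explicit parent vertex of an attached-tree vertex. -/
def pvtx (v : W) (i : Fin m) : List (Fin k) → Vtx W m k
  | [] => Sum.inl v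
  | _ :: s => Sum.inr (v, i, s)

lemma par_inr (v : W) (i : Fin m) (s : List (Fin k)) :
    par (Sum.inr (v, i, s) : Vtx W m k) = some (pvtx v i s) := by cases s <;> rfl

lemma depth_pvtx (v : W) (i : Fin m) (s : List (Fin k)) :
    depth (pvtx v i s : Vtx W m k) = s.length := by
  cases s <;> simp [pvtx, depth]

lemma depth_of_par {x y : Vtx W m k} (h : par x = some y) : depth x = depth y + 1 := by
  match x with
  | Sum.inl u => simp [par] at h
  | Sum.inr (v, i, s) =>
      rw [par_inr] at h
      obtain rfl := Option.some_injective _ h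
      rw [depth_pvtx]
      rfl

lemma pr_of_par {x y : Vtx W m k} (h : par x = some y) : pr x = pr y := by
  match x with
  | Sum.inl u => simp [par] at h
  | Sum.inr (v, i, s) =>
      rw [par_inr] at h
      obtain rfl := Option.some_injective _ h
      cases s <;> rfl

variable (T' : SimpleGraph V') (e : W ≃ V')

/-- The extended graph. -/
def Tr (T' : SimpleGraph V') (e : W ≃ V') (m k : ℕ) : SimpleGraph (Vtx W m k) where
  Adj x y := (∃ u w, x = Sum.inl u ∧ y = Sum.inl w ∧ T'.Adj (e u) (e w)) ∨
    par x = some y ∨ par y = some x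
  symm := by
    constructor
    rintro x y (⟨u, w, hx, hy, h⟩ | h | h)
    · exact Or.inl ⟨w, u, hy, hx, h.symm⟩
    · exact Or.inr (Or.inr h)
    · exact Or.inr (Or.inl h)
  loopless := by
    constructor
    rintro x (⟨u, w, hx, hy, h⟩ | h | h)
    · subst hx
      obtain rfl : u = w := Sum.inl_injective hy
      exact h.ne rfl
    · have := depth_of_par h; omega
    · have := depth_of_par h; omega

lemma adj_inl_iff {u : W} {y : Vtx W m k} : (Tr T' e m k).Adj (Sum.inl u) y ↔
    (∃ w, y = Sum.inl w ∧ T'.Adj (e u) (e w)) ∨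
      (∃ i : Fin m, y = Sum.inr (u, i, ([] : List (Fin k)))) := by
  constructor
  · rintro (⟨u', w, hx, hy, h⟩ | h | h)
    · obtain rfl : u = u' := Sum.inl_injective hx
      exact Or.inl ⟨w, hy, h⟩
    · simp [par] at h
    · match y with
      | Sum.inl _ => simp [par] at h
      | Sum.inr (v, i, s) =>
          rw [par_inr] at h
          obtain h := Option.some_injective _ h
          match s, h with
          | [], h =>
              obtain rfl : v = u := Sum.inl_injective h
              exact Or.inr ⟨i, rfl⟩
          | _ :: t, h => simp [pvtx] at h
  · rintro (⟨w, rfl, h⟩ | ⟨i, rfl⟩)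
    · exact Or.inl ⟨u, w, rfl, rfl, h⟩
    · exact Or.inr (Or.inr (by simp [par]))

lemma adj_inr_iff {p : W × Fin m × List (Fin k)} {y : Vtx W m k} :
    (Tr T' e m k).Adj (Sum.inr p) y ↔
      y = pvtx p.1 p.2.1 p.2.2 ∨ ∃ a : Fin k, y = Sum.inr (p.1, p.2.1, a :: p.2.2) := by
  obtain ⟨v, i, s⟩ := p
  constructor
  · rintro (⟨u', w, hx, hy, h⟩ | h | h)
    · simp at hx
    · rw [par_inr] at h
      exact Or.inl (Option.some_injective _ h).symm
    · match y with
      | Sum.inl _ => simp [par] at h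
      | Sum.inr (w, j, t) =>
          rw [par_inr] at h
          obtain h := Option.some_injective _ h
          match t, h with
          | [], h => simp [pvtx] at h
          | a :: t', h =>
              simp only [pvtx, Sum.inr.injEq, Prod.mk.injEq] at h
              obtain ⟨rfl, rfl, rfl⟩ := h
              exact Or.inr ⟨a, rfl⟩
  · rintro (rfl | ⟨a, rfl⟩)
    · exact Or.inr (Or.inl (par_inr v i s))
    · exact Or.inr (Or.inr (par_inr v i (a :: s)))

/-- Any sufficiently shallow neighbor of an attached-tree vertex is its parent. -/
lemma parent_unique {p : W × Fin m × List (Fin k)} {y : Vtx W m k}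
    (h : (Tr T' e m k).Adj (Sum.inr p) y) (hd : depth y ≤ depth (Sum.inr p : Vtx W m k)) :
    y = pvtx p.1 p.2.1 p.2.2 := by
  rcases (adj_inr_iff T' e).1 h with h' | ⟨a, rfl⟩
  · exact h'
  · exfalso
    obtain ⟨v, i, s⟩ := p
    simp [depth] at hd

/-- The canonical homomorphism from the base tree into the extension. -/
def φ₀ : T'.comap e →g Tr T' e m k where
  toFun := Sum.inl
  map_rel' := fun {a b} hab => Or.inl ⟨a, b, rfl, rfl, hab⟩

/-- The comparison homomorphism from `T'` into the extension. -/
def ψ : T' →g Tr T' e m k where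
  toFun v := Sum.inl (e.symm v)
  map_rel' := fun {a b} hab => Or.inl ⟨e.symm a, e.symm b, rfl, rfl, by simpa using hab⟩

lemma exists_last {α : Type*} {G : SimpleGraph α} {x y : α} (q : G.Walk x y)
    (hq : q.length ≠ 0) : ∃ z, z ∈ q.support ∧ G.Adj z y ∧ s(z, y) ∈ q.edges := by
  induction q with
  | nil => simp at hq
  | @cons u v w h q' ih =>
    by_cases h0 : q'.length = 0
    · obtain rfl : v = w := Walk.eq_of_length_eq_zero h0
      exact ⟨u, by simp, h, by simp⟩
    · obtain ⟨z, hz1, hz2, hz3⟩ := ih h0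
      exact ⟨z, by simp [hz1], hz2, by simp [hz3]⟩

lemma no_cycle_inr {p : W × Fin m × List (Fin k)}
    (c : (Tr T' e m k).Walk (Sum.inr p) (Sum.inr p)) (hc : c.IsCycle)
    (hmax : ∀ y ∈ c.support, depth y ≤ depth (Sum.inr p : Vtx W m k)) : False := by
  cases c with
  | nil => exact hc.ne_nil rfl
  | @cons _ b _ h q =>
    obtain ⟨hqpath, hqe⟩ := (Walk.cons_isCycle_iff q h).1 hc
    have hlen : 3 ≤ q.length + 1 := by
      simpa using hc.three_le_length
    obtain ⟨z, hz1, hz2, hz3⟩ := exists_last q (by omega)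
    have hb : b = pvtx p.1 p.2.1 p.2.2 :=
      parent_unique T' e h (hmax b (by simp))
    have hz : z = pvtx p.1 p.2.1 p.2.2 :=
      parent_unique T' e hz2.symm (hmax z (by simp [hz1]))
    apply hqe
    have : s(z, (Sum.inr p : Vtx W m k)) = s(Sum.inr p, b) := by
      rw [Sym2.eq_swap, hb, hz]
    rwa [this] at hz3

lemma pullback : ∀ {x y : Vtx W m k} (p : (Tr T' e m k).Walk x y)
    (_ : ∀ z ∈ p.support, depth z = 0) {a b : W} (ha : Sum.inl a = x) (hb : Sum.inl b = y),
    ∃ p' : (T'.comap e).Walk a b, p'.map (φ₀ T' e) = p.copy ha.symm hb.symm := by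
  intro x y p
  induction p with
  | nil =>
    intro hall a b ha hb
    subst ha
    obtain rfl : b = a := Sum.inl_injective hb
    exact ⟨Walk.nil, rfl⟩
  | @cons x c y h q ih =>
    intro hall a b ha hb
    subst ha
    subst hb
    have hc0 : depth c = 0 := hall c (by simp)
    obtain ⟨c₀, rfl⟩ : ∃ c₀, c = Sum.inl c₀ := by
      match c with
      | Sum.inl c₀ => exact ⟨c₀, rfl⟩
      | Sum.inr _ => simp [depth] at hc0
    have hadj : (T'.comap e).Adj a c₀ := by
      rcases h with ⟨u', w', hx, hy, h'⟩ | h' | h'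
      · obtain rfl : a = u' := Sum.inl_injective hx
        obtain rfl : c₀ = w' := Sum.inl_injective hy
        exact h'
      · simp [par] at h'
      · simp [par] at h'
    obtain ⟨q', hq'⟩ := ih (fun z hz => hall z (by simp [hz])) rfl rfl
    refine ⟨Walk.cons hadj q', ?_⟩
    rw [Walk.copy_rfl_rfl] at hq' ⊢
    rw [Walk.map_cons, hq']
    rfl

lemma tr_isAcyclic (hacyc : T'.IsAcyclic) : (Tr T' e m k).IsAcyclic := by
  classical
  intro x c hc
  have hne : c.support.toFinset.Nonempty := by
    simp [List.toFinset_nonempty_iff, Walk.support_ne_nil]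
  obtain ⟨z, hz', hmax'⟩ := Finset.exists_max_image c.support.toFinset depth hne
  rw [List.mem_toFinset] at hz'
  have hmax : ∀ y ∈ c.support, depth y ≤ depth z := fun y hy =>
    hmax' y (List.mem_toFinset.2 hy)
  have hc' : (c.rotate z hz').IsCycle := hc.rotate hz'
  have hmem : ∀ y ∈ (c.rotate z hz').support, depth y ≤ depth z := by
    intro y hy
    rw [Walk.support_eq_cons] at hy
    rcases List.mem_cons.1 hy with rfl | hy
    · exact le_refl _
    · exact hmax y (List.mem_of_mem_tail (((Walk.support_rotate c z hz').mem_iff).1 hy))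
  obtain z₀ | p := z
  swap
  · exact no_cycle_inr T' e _ hc' hmem
  · 
      have hall : ∀ y ∈ (c.rotate _ hz').support, depth y = 0 := by
        intro y hy
        have := hmem y hy
        have h0 : depth (Sum.inl z₀ : Vtx W m k) = 0 := rfl
        rw [h0] at this
        exact Nat.le_zero.mp this
      obtain ⟨p', hp'⟩ := pullback T' e (c.rotate _ hz') hall rfl rfl
      rw [Walk.copy_rfl_rfl] at hp'
      have hcyc : p'.IsCycle := by
        rw [← Walk.map_isCycle_iff_of_injective (f := φ₀ T' e) Sum.inl_injective]
        rw [hp']; exact hc'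
      have : (p'.map (⟨⇑e, fun {a b} h => h⟩ : T'.comap e →g T')).IsCycle :=
        hcyc.map (by exact e.injective)
      exact hacyc _ this

lemma reach_root (v : W) (i : Fin m) :
    ∀ s : List (Fin k), (Tr T' e m k).Reachable (Sum.inl v) (Sum.inr (v, i, s))
  | [] => Adj.reachable (Or.inr (Or.inr (by simp [par])))
  | a :: s => ((reach_root v i s).trans
      (Adj.reachable (Or.inr (Or.inr (by simp [par])))))

lemma reach_pr (x : Vtx W m k) : (Tr T' e m k).Reachable (Sum.inl (pr x)) x := by
  match x with
  | Sum.inl u => exact Reachable.refl _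
  | Sum.inr (v, i, s) => exact reach_root T' e v i s

lemma tr_connected (hconn : T'.Connected) : (Tr T' e m k).Connected := by
  have hne : Nonempty V' := hconn.nonempty
  rw [connected_iff]
  refine ⟨?_, ⟨Sum.inl (e.symm (Classical.arbitrary V'))⟩⟩
  intro x y
  refine ((reach_pr T' e x).symm.trans ?_).trans (reach_pr T' e y)
  have h : T'.Reachable (e (pr x)) (e (pr y)) := hconn.preconnected _ _
  obtain ⟨p⟩ := h
  have : (Tr T' e m k).Reachable (Sum.inl (e.symm (e (pr x))))
      (Sum.inl (e.symm (e (pr y)))) := ⟨p.map (ψ T' e)⟩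
  simpa using this

lemma dist_le_walk (hconn : T'.Connected) :
    ∀ {x y : Vtx W m k} (p : (Tr T' e m k).Walk x y),
      T'.dist (e (pr x)) (e (pr y)) ≤ p.length := by
  intro x y p
  induction p with
  | nil => simp
  | @cons x' c' y' h q ih =>
    rw [Walk.length_cons]
    rcases h with ⟨u', w', hx, hy, hadj⟩ | hp | hp
    · subst hx; subst hy
      have h1 : T'.dist (e u') (e w') ≤ 1 := by
        simpa using SimpleGraph.dist_le (Walk.cons hadj Walk.nil)
      have h2 : T'.dist (e (pr (Sum.inl u' : Vtx W m k))) (e (pr y')) ≤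
          T'.dist (e u') (e w') + T'.dist (e (pr (Sum.inl w' : Vtx W m k))) (e (pr y')) :=
        hconn.dist_triangle
      have h3 := ih
      omega
    · rw [pr_of_par hp]
      exact Nat.le_succ_of_le ih
    · rw [← pr_of_par hp]
      exact Nat.le_succ_of_le ih

lemma tr_dist (hconn : T'.Connected) (u v : V') :
    (Tr T' e m k).dist (Sum.inl (e.symm u)) (Sum.inl (e.symm v)) = T'.dist u v := by
  apply le_antisymm
  · obtain ⟨p, hp⟩ := (hconn.preconnected u v).exists_walk_length_eq_dist
    calc (Tr T' e m k).dist (Sum.inl (e.symm u)) (Sum.inl (e.symm v))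
        ≤ (p.map (ψ T' e)).length := SimpleGraph.dist_le _
      _ = T'.dist u v := by rw [Walk.length_map, hp]
  · obtain ⟨p, hp⟩ := (((tr_connected T' e hconn).preconnected
      (Sum.inl (e.symm u)) (Sum.inl (e.symm v)))).exists_walk_length_eq_dist
    have := dist_le_walk T' e hconn p
    simp only [pr] at this
    rw [hp] at this
    simpa using this

lemma ncard_inl (q : ℕ)
    (hreg : ∀ v : V', (T'.neighborSet v).ncard = q + 1) (u : W) :
    ((Tr T' e m k).neighborSet (Sum.inl u)).ncard = q + 1 + m := by
  have hinj : Function.Injective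
      (fun i : Fin m => (Sum.inr (u, i, ([] : List (Fin k))) : Vtx W m k)) := by
    intro i j hij
    simpa using hij
  have hset : (Tr T' e m k).neighborSet (Sum.inl u) =
      (Sum.inl '' (e.symm '' T'.neighborSet (e u))) ∪
        ((fun i : Fin m => (Sum.inr (u, i, ([] : List (Fin k))) : Vtx W m k)) '' Set.univ) := by
    ext y
    rw [mem_neighborSet, adj_inl_iff]
    constructor
    · rintro (⟨w, rfl, h⟩ | ⟨i, rfl⟩)
      · exact Or.inl ⟨w, ⟨e w, h, by simp⟩, rfl⟩
      · exact Or.inr ⟨i, trivial, rfl⟩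
    · rintro (⟨w', ⟨a, ha, rfl⟩, rfl⟩ | ⟨i, -, rfl⟩)
      · exact Or.inl ⟨e.symm a, rfl, by simpa using ha⟩
      · exact Or.inr ⟨i, rfl⟩
  have hfin : (T'.neighborSet (e u)).Finite :=
    Set.finite_of_ncard_ne_zero (by rw [hreg]; omega)
  have hfin1 : ((Sum.inl '' (e.symm '' T'.neighborSet (e u))) : Set (Vtx W m k)).Finite :=
    (hfin.image _).image _
  have hfin2 : (((fun i : Fin m => (Sum.inr (u, i, ([] : List (Fin k))) : Vtx W m k)) ''
      Set.univ)).Finite := Set.finite_univ.image _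
  rw [hset, Set.ncard_union_eq ?_ hfin1 hfin2]
  · rw [Set.ncard_image_of_injective _ Sum.inl_injective,
      Set.ncard_image_of_injective _ e.symm.injective, hreg,
      Set.ncard_image_of_injective _ hinj,
      Set.ncard_univ, Nat.card_eq_fintype_card, Fintype.card_fin]
  · rw [Set.disjoint_left]
    rintro a ⟨w', -, rfl⟩ ⟨i, -, h⟩
    simp at h

lemma ncard_inr (p : W × Fin m × List (Fin k)) :
    ((Tr T' e m k).neighborSet (Sum.inr p)).ncard = k + 1 := by
  have hset : (Tr T' e m k).neighborSet (Sum.inr p) =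
      insert (pvtx p.1 p.2.1 p.2.2)
        ((fun a : Fin k => (Sum.inr (p.1, p.2.1, a :: p.2.2) : Vtx W m k)) '' Set.univ) := by
    ext y
    rw [mem_neighborSet, adj_inr_iff]
    constructor
    · rintro (rfl | ⟨a, rfl⟩)
      · exact Set.mem_insert _ _
      · exact Set.mem_insert_of_mem _ ⟨a, trivial, rfl⟩
    · rintro (rfl | ⟨a, -, rfl⟩)
      · exact Or.inl rfl
      · exact Or.inr ⟨a, rfl⟩
  have hinj : Function.Injective
      (fun a : Fin k => (Sum.inr (p.1, p.2.1, a :: p.2.2) : Vtx W m k)) := by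
    intro a b h
    simpa using h
  have hfin : (((fun a : Fin k => (Sum.inr (p.1, p.2.1, a :: p.2.2) : Vtx W m k)) ''
      Set.univ)).Finite := Set.finite_univ.image _
  rw [hset, Set.ncard_insert_of_notMem ?_ hfin]
  · rw [Set.ncard_image_of_injective _ hinj, Set.ncard_univ, Nat.card_eq_fintype_card,
      Fintype.card_fin]
  · rintro ⟨a, -, h⟩
    have := congrArg depth h
    rw [depth_pvtx] at this
    have h0 : depth (Sum.inr (p.1, p.2.1, a :: p.2.2) : Vtx W m k) = p.2.2.length + 2 := rfl
    rw [h0] at this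
    omega

end UnramifiedTreeExt

open UnramifiedTreeExt in
/-- Attaching `q^f − q` new edges at every vertex of a `(q+1)`-regular tree `T'`, and
rooted `q^f`-ary trees beyond them, yields a `(q^f+1)`-regular tree `T`: there exist a
tree `T` and an injection `ι` of the vertices of `T'` into those of `T` such that `T`
is a connected acyclic `(q^f+1)`-regular graph, `ι` is an isometric embedding for the
graph metrics, and the ball of radius `R` in `T` intersected with (the image of) `T'`
is exactly the ball of radius `R` in `T'`. -/
theorem unramified_tree_extension
    {V' : Type*} (T' : SimpleGraph V') (hconn : T'.Connected) (hacyc : T'.IsAcyclic)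
    (q f : ℕ) (hq : 2 ≤ q) (hf : 1 ≤ f)
    (hreg : ∀ v : V', (T'.neighborSet v).ncard = q + 1) :
    ∃ (V : Type) (T : SimpleGraph V) (ι : V' → V),
      Function.Injective ι ∧ T.Connected ∧ T.IsAcyclic ∧
      (∀ v : V, (T.neighborSet v).ncard = q ^ f + 1) ∧
      (∀ u v : V', T.dist (ι u) (ι v) = T'.dist u v) ∧
      (∀ (x : V') (R : ℕ),
        ι ⁻¹' {y : V | T.dist (ι x) y ≤ R} = {y : V' | T'.dist x y ≤ R}) := by
  classical
  -- countability of V'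
  obtain ⟨v₀⟩ := hconn.nonempty
  have hnbfin : ∀ v : V', (T'.neighborSet v).Finite := fun v =>
    Set.finite_of_ncard_ne_zero (by rw [hreg]; omega)
  have hball : ∀ n : ℕ, {w : V' | T'.dist v₀ w ≤ n}.Finite := by
    intro n
    induction n with
    | zero =>
      apply Set.Finite.subset (Set.finite_singleton v₀)
      intro w hw
      simp only [Set.mem_setOf_eq, Nat.le_zero] at hw
      simp [(hconn.dist_eq_zero_iff.1 hw).symm]
    | succ n ih =>
      apply Set.Finite.subset (ih.union (Set.Finite.biUnion ih
        (fun u _ => hnbfin u)))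
      intro w hw
      simp only [Set.mem_setOf_eq] at hw
      obtain ⟨p, hp⟩ := (hconn.preconnected w v₀).exists_walk_length_eq_dist
      cases p with
      | nil => exact Or.inl (by simp [SimpleGraph.dist_self])
      | @cons _ c _ h p₁ =>
        refine Or.inr (Set.mem_biUnion (show T'.dist v₀ c ≤ n from ?_) ?_)
        · have h1 := SimpleGraph.dist_le p₁.reverse
          rw [Walk.length_reverse] at h1
          have h2 : T'.dist w v₀ = T'.dist v₀ w := SimpleGraph.dist_comm
          have h3 : p₁.length + 1 = T'.dist w v₀ := by
            simpa [Walk.length_cons] using hp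
          omega
        · exact h.symm
  have hcount : Countable V' := by
    rw [← Set.countable_univ_iff]
    have : (Set.univ : Set V') ⊆ ⋃ n : ℕ, {w : V' | T'.dist v₀ w ≤ n} := by
      intro w _
      exact Set.mem_iUnion.2 ⟨T'.dist v₀ w, by simp⟩
    exact Set.Countable.mono this (Set.countable_iUnion fun n => (hball n).countable)
  have hsmall : Small.{0} V' := inferInstance
  -- the construction
  set W : Type := Shrink V' with hW
  set e : W ≃ V' := (equivShrink V').symm with he
  have hqf : q ≤ q ^ f := Nat.le_self_pow (by omega) q
  set m : ℕ := q ^ f - q with hm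
  set k : ℕ := q ^ f with hk
  refine ⟨Vtx W m k, Tr T' e m k, fun v => Sum.inl (e.symm v), ?_, ?_, ?_, ?_, ?_, ?_⟩
  · exact fun a b h => e.symm.injective (Sum.inl_injective h)
  · exact tr_connected T' e hconn
  · exact tr_isAcyclic T' e hacyc
  · intro v
    match v with
    | Sum.inl u =>
      rw [ncard_inl T' e q hreg u]
      omega
    | Sum.inr p =>
      rw [ncard_inr T' e p]
  · intro u v
    exact tr_dist T' e hconn u v
  · intro x R
    ext y
    simp only [Set.mem_preimage, Set.mem_setOf_eq]
    rw [tr_dist T' e hconn x y]
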